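/- arXiv:2209.03730 — 2 statements merged into one kernel-verified Lean document; each statement's English description precedes it below -/
import Mathlib

section
/- For every n ≥ 1 and every binary vector v of length n, there exists a positive integer N with 1 ≤ N ≤ 2^n whose parity vector of length n equals v. (Claim underlying the paper's Notation 2.1: 1 ≤ N_0(v) ≤ 2^{n(v)}.) -/
/-- The Collatz map `T`. -/
def collatzT (N : ℕ) : ℕ := if N % 2 = 0 then N / 2 else (3 * N + 1) / 2

/-- The parity vector of length `n` of `N`: entry `k` is `true` iff `T^[k] N` is odd. -/
def parityVec (N n : ℕ) : List Bool :=
  (List.range n).map (fun k => decide ((collatzT^[k] N) % 2 = 1))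

/-- `m(v)`: the number of ones of a binary vector. -/
def mOnes (v : List Bool) : ℕ := v.count true

/-- `P(v)`: the characteristic number of a binary vector,
`P(v) = Σ_{k=1}^{m} 3^(m-k) * 2^(j_k - 1)` where `j_1 < … < j_m` are the positions of ones. -/
def Pchar : List Bool → ℕ
  | [] => 0
  | e :: rest => (if e then 3 ^ mOnes rest else 0) + 2 * Pchar rest

lemma parityVec_succ (N n : ℕ) :
    parityVec N (n+1) = decide (N % 2 = 1) :: parityVec (collatzT N) n := by
  simp [parityVec, List.range_succ_eq_map, List.map_map, Function.comp,
    Function.iterate_succ_apply]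
  exact ⟨rfl, fun _ _ => rfl⟩

lemma parity_period : ∀ (k M t : ℕ), parityVec (M + 2^k * t) k = parityVec M k := by
  intro k
  induction k with
  | zero => intro M t; simp [parityVec]
  | succ k ih =>
    intro M t
    have h2t : 2^(k+1) * t = 2 * (2^k * t) := by ring
    rw [parityVec_succ, parityVec_succ, h2t]
    have hpar : (M + 2 * (2^k * t)) % 2 = M % 2 := by omega
    rw [hpar]
    congr 1
    rcases Nat.even_or_odd M with hM | hM
    · have hM2 : M % 2 = 0 := Nat.even_iff.mp hM
      have h1 : collatzT (M + 2 * (2^k * t)) = M / 2 + 2^k * t := by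
        simp only [collatzT]
        rw [if_pos (by omega)]
        omega
      have h2 : collatzT M = M / 2 := by simp [collatzT, hM2]
      rw [h1, h2, ih]
    · have hM2 : M % 2 = 1 := Nat.odd_iff.mp hM
      have h1 : collatzT (M + 2 * (2^k * t)) = (3*M+1)/2 + 2^k * (3*t) := by
        simp only [collatzT]
        rw [if_neg (by omega)]
        have : 2^k * (3*t) = 3 * (2^k * t) := by ring
        omega
      have h2 : collatzT M = (3*M+1)/2 := by simp [collatzT, hM2]
      rw [h1, h2, ih]

lemma aux_ex : ∀ v : List Bool, ∃ N, 1 ≤ N ∧ N ≤ 2 ^ v.length ∧ parityVec N v.length = v := by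
  intro v
  induction v with
  | nil => exact ⟨1, le_refl _, by norm_num, by simp [parityVec]⟩
  | cons b rest ih =>
    obtain ⟨M, hM1, hM2, hMv⟩ := ih
    set L := rest.length with hL
    have hp1 : (1:ℕ) ≤ 2^L := Nat.one_le_two_pow
    cases b with
    | false =>
      refine ⟨2*M, by omega, ?_, ?_⟩
      · show 2*M ≤ 2^(L+1); rw [pow_succ]; omega
      · show parityVec (2*M) (L+1) = false :: rest
        rw [parityVec_succ]
        have h1 : collatzT (2*M) = M := by
          simp only [collatzT]
          rw [if_pos (by omega)]
          omega
        rw [h1, hMv]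
        simp
    | true =>
      have h3 : 2^L % 3 = 1 ∨ 2^L % 3 = 2 := by
        have : ¬ (3 ∣ 2^L) := by
          intro h
          have := Nat.Prime.dvd_of_dvd_pow Nat.prime_three h
          omega
        omega
      obtain ⟨t, ht2, ht⟩ : ∃ t, t ≤ 2 ∧ (2*(M + 2^L*t)) % 3 = 1 := by
        have hm3 : M % 3 = 0 ∨ M % 3 = 1 ∨ M % 3 = 2 := by omega
        rcases h3 with h | h <;> rcases hm3 with h' | h' | h'
        · exact ⟨2, by omega, by omega⟩
        · exact ⟨1, by omega, by omega⟩
        · exact ⟨0, by omega, by omega⟩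
        · exact ⟨1, by omega, by omega⟩
        · exact ⟨2, by omega, by omega⟩
        · exact ⟨0, by omega, by omega⟩
      obtain ⟨N, hN⟩ : ∃ N, 2*(M + 2^L*t) = 3*N + 1 := ⟨(2*(M + 2^L*t)-1)/3, by omega⟩
      have hNodd : N % 2 = 1 := by omega
      have hTN : collatzT N = M + 2^L*t := by
        simp only [collatzT]
        rw [if_neg (by omega)]
        omega
      refine ⟨N, by omega, ?_, ?_⟩
      · show N ≤ 2^(L+1)
        have hqt : 2^L * t ≤ 2^L * 2 := Nat.mul_le_mul_left _ ht2
        rw [pow_succ]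
        omega
      · show parityVec N (L+1) = true :: rest
        rw [parityVec_succ, hTN, parity_period, hMv]
        simp [hNodd]

/-- For every binary vector v of length n ≥ 1, there is a positive integer
`N ≤ 2^n` whose parity vector of length n equals v. -/
theorem stmt_3 (n : ℕ) (hn : 1 ≤ n) (v : List Bool) (hv : v.length = n) :
    ∃ N : ℕ, 1 ≤ N ∧ N ≤ 2 ^ n ∧ parityVec N n = v := by
  subst hv; exact aux_ex v
end

section
/- Let V = (e_1, e_2, …) be an infinite binary sequence containing infinitely many entries equal to 1. For j ≥ 1 let m_j(V) and P_j(V) denote m(R_j(V)) and P(R_j(V)) for the truncation R_j(V) = (e_1, …, e_j). Then the real sequence P_j(V) / (2^j · 3^{m_j(V)}) tends to 0 as j → ∞. (Paper's Corollary 5.6.) -/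
lemma mOnes_nil : mOnes [] = 0 := rfl

lemma mOnes_cons (e : Bool) (rest : List Bool) :
    mOnes (e :: rest) = (if e then 1 else 0) + mOnes rest := by
  cases e <;> simp [mOnes, List.count_cons] <;> omega

lemma mOnes_le_length (v : List Bool) : mOnes v ≤ v.length :=
  List.count_le_length

lemma Pchar_bound (v : List Bool) :
    2 ^ mOnes v * Pchar v ≤ 2 ^ v.length * 3 ^ mOnes v := by
  induction v with
  | nil => simp [Pchar]
  | cons e rest ih =>
    have hml : (2:ℕ) ^ mOnes rest ≤ 2 ^ rest.length :=
      Nat.pow_le_pow_right (by norm_num) (mOnes_le_length rest)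
    cases e with
    | false =>
      simp only [Pchar, mOnes_cons, if_neg, Bool.false_eq_true, not_false_iff,
        if_false, List.length_cons, zero_add]
      calc 2 ^ mOnes rest * (2 * Pchar rest)
          = 2 * (2 ^ mOnes rest * Pchar rest) := by ring
        _ ≤ 2 * (2 ^ rest.length * 3 ^ mOnes rest) := by
            exact Nat.mul_le_mul_left _ ih
        _ = 2 ^ (rest.length + 1) * 3 ^ mOnes rest := by ring
    | true =>
      simp only [Pchar, mOnes_cons, if_true, List.length_cons]
      have : 2 ^ (1 + mOnes rest) * (3 ^ mOnes rest + 2 * Pchar rest)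
          = 2 * (2 ^ mOnes rest * 3 ^ mOnes rest)
            + 4 * (2 ^ mOnes rest * Pchar rest) := by ring
      rw [this]
      have h1 : 2 * (2 ^ mOnes rest * 3 ^ mOnes rest)
          ≤ 2 * (2 ^ rest.length * 3 ^ mOnes rest) :=
        Nat.mul_le_mul_left _ (Nat.mul_le_mul_right _ hml)
      have h2 : 4 * (2 ^ mOnes rest * Pchar rest)
          ≤ 4 * (2 ^ rest.length * 3 ^ mOnes rest) :=
        Nat.mul_le_mul_left _ ih
      calc 2 * (2 ^ mOnes rest * 3 ^ mOnes rest)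
            + 4 * (2 ^ mOnes rest * Pchar rest)
          ≤ 2 * (2 ^ rest.length * 3 ^ mOnes rest)
            + 4 * (2 ^ rest.length * 3 ^ mOnes rest) := Nat.add_le_add h1 h2
        _ = 2 ^ (rest.length + 1) * 3 ^ (1 + mOnes rest) := by ring

lemma mOnes_append_singleton (l : List Bool) (b : Bool) :
    mOnes (l ++ [b]) = mOnes l + (if b then 1 else 0) := by
  cases b <;> simp [mOnes, List.count_append, List.count_cons]

/-- Paper's Corollary 5.6: for an infinite binary sequence with infinitely many
ones, `P_j(V) / (2^j * 3^(m_j(V))) → 0` as j → ∞. -/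
theorem stmt_16 (V : ℕ → Bool) (hinf : {i : ℕ | V i = true}.Infinite) :
    Filter.Tendsto
      (fun j => (Pchar ((List.range j).map V) : ℝ) /
        (2 ^ j * 3 ^ mOnes ((List.range j).map V)))
      Filter.atTop (nhds 0) := by
  set m : ℕ → ℕ := fun j => mOnes ((List.range j).map V) with hm
  have hstep : ∀ j, m (j + 1) = m j + (if V j then 1 else 0) := by
    intro j
    simp only [hm, List.range_succ, List.map_append, List.map_cons, List.map_nil]
    exact mOnes_append_singleton _ _
  have hmono : Monotone m := by
    apply monotone_nat_of_le_succ
    intro j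
    rw [hstep j]
    exact Nat.le_add_right _ _
  have hunbdd : ∀ N, ∃ j, N ≤ m j := by
    intro N
    induction N with
    | zero => exact ⟨0, Nat.zero_le _⟩
    | succ N ih =>
      obtain ⟨j, hj⟩ := ih
      obtain ⟨i, hi, hji⟩ := hinf.exists_gt j
      refine ⟨i + 1, ?_⟩
      rw [hstep i, if_pos (show V i = true from hi)]
      have := hmono (le_of_lt hji)
      omega
  have hmtop : Filter.Tendsto m Filter.atTop Filter.atTop :=
    hmono.tendsto_atTop_atTop hunbdd
  have hg : Filter.Tendsto (fun j => ((1:ℝ)/2) ^ m j) Filter.atTop (nhds 0) := by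
    exact (tendsto_pow_atTop_nhds_zero_of_lt_one (by norm_num) (by norm_num)).comp hmtop
  apply squeeze_zero (g := fun j => ((1:ℝ)/2) ^ m j)
  · intro j
    positivity
  · intro j
    have hb := Pchar_bound ((List.range j).map V)
    have hbr : (2:ℝ) ^ m j * Pchar ((List.range j).map V)
        ≤ 2 ^ j * 3 ^ m j := by
      have := (Nat.cast_le (α := ℝ)).2 hb
      push_cast at this
      simpa [hm, List.length_map, List.length_range] using this
    rw [div_le_iff₀ (by positivity)]
    rw [div_pow, one_pow]
    rw [div_mul_eq_mul_div, le_div_iff₀ (by positivity)]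
    nlinarith [hbr, pow_pos (show (0:ℝ) < 2 by norm_num) (m j),
      pow_pos (show (0:ℝ) < 2 by norm_num) j,
      pow_pos (show (0:ℝ) < 3 by norm_num) (m j)]
  · exact hg
end
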